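/- Let P be the random walk matrix of a connected weighted bipartite graph G = (X,Y) with adjacency matrix A and degree matrix D (so P = D^{-1}A). Let s_X, s_Y ≥ 0 and let S be the diagonal matrix equal to s_X on X and s_Y on Y, and S̄ = sqrt(s_X·s_Y)·I. Then the following are equivalent: (1) D^{-1/2} A D^{-1/2} ⪯ S + vvᵀ for some vector v; (2) D^{-1/2} A D^{-1/2} ⪯ S̄ + wwᵀ for some vector w; (3) λ₂(P) ≤ sqrt(s_X·s_Y); (4) λ₂(P − S) ≤ 0. -/

import Mathlib

set_option linter.unusedSectionVars false
set_option linter.unusedVariables false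
open Finset Matrix

section aux
variable {α : Type*} [Fintype α] [DecidableEq α]

/-- standard (unweighted) Courant-Fischer set for a matrix. -/
def Eset (M : Matrix α α ℝ) : Set ℝ :=
  {c : ℝ | ∃ v : α → ℝ, v ≠ 0 ∧ ∀ z : α → ℝ, (∑ a, z a * v a) = 0 →
    (∑ a, z a * M.mulVec z a) ≤ c * ∑ a, z a * z a}

lemma sum_sq_nonneg' (z : α → ℝ) : (0:ℝ) ≤ ∑ a, z a * z a :=
  Finset.sum_nonneg fun a _ => mul_self_nonneg _

lemma sum_sq_pos' {z : α → ℝ} (hz : z ≠ 0) : (0:ℝ) < ∑ a, z a * z a := by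
  rcases Function.ne_iff.mp hz with ⟨a, ha⟩
  have : (0:ℝ) < z a * z a := mul_self_pos.mpr ha
  calc (0:ℝ) < z a * z a := this
    _ ≤ ∑ b, z b * z b :=
      Finset.single_le_sum (fun b _ => mul_self_nonneg (z b)) (mem_univ a)

lemma quad_expand (M : Matrix α α ℝ) (z : α → ℝ) :
    ∑ a, z a * M.mulVec z a = ∑ a, ∑ b, M a b * (z a * z b) := by
  refine Finset.sum_congr rfl fun a _ => ?_
  rw [Matrix.mulVec, dotProduct, Finset.mul_sum]
  exact Finset.sum_congr rfl fun b _ => by ring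

lemma abs_quad_le (M : Matrix α α ℝ) (z : α → ℝ) :
    |∑ a, z a * M.mulVec z a| ≤ (∑ a, ∑ b, |M a b|) * ∑ a, z a * z a := by
  rw [quad_expand, Finset.sum_mul]
  refine (Finset.abs_sum_le_sum_abs _ _).trans (Finset.sum_le_sum fun a _ => ?_)
  rw [Finset.sum_mul]
  refine (Finset.abs_sum_le_sum_abs _ _).trans (Finset.sum_le_sum fun b _ => ?_)
  rw [abs_mul]
  refine mul_le_mul_of_nonneg_left ?_ (abs_nonneg _)
  have h1 : |z a * z b| ≤ (z a * z a + z b * z b) / 2 := by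
    rw [abs_mul]
    nlinarith [sq_nonneg (|z a| - |z b|), abs_nonneg (z a), abs_nonneg (z b),
      abs_mul_abs_self (z a), abs_mul_abs_self (z b)]
  refine h1.trans ?_
  have h2 : z a * z a ≤ ∑ c, z c * z c :=
    Finset.single_le_sum (fun c _ => mul_self_nonneg (z c)) (mem_univ a)
  have h3 : z b * z b ≤ ∑ c, z c * z c :=
    Finset.single_le_sum (fun c _ => mul_self_nonneg (z c)) (mem_univ b)
  linarith

lemma Eset_upward {M : Matrix α α ℝ} {c c' : ℝ} (h : c ∈ Eset M) (hcc : c ≤ c') :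
    c' ∈ Eset M := by
  obtain ⟨v, hv, hb⟩ := h
  exact ⟨v, hv, fun z hz => (hb z hz).trans
    (mul_le_mul_of_nonneg_right hcc (sum_sq_nonneg' z))⟩

lemma Eset_nonempty [Nonempty α] (M : Matrix α α ℝ) : (Eset M).Nonempty := by
  refine ⟨∑ a, ∑ b, |M a b|, fun _ => 1, ?_, fun z _ => ?_⟩
  · intro h
    exact one_ne_zero (congrFun h (Classical.arbitrary α))
  · exact (le_abs_self _).trans (abs_quad_le M z)

lemma exists_ne_zero_dot_eq_zero (hcard : 1 < Fintype.card α) (v : α → ℝ) :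
    ∃ z : α → ℝ, z ≠ 0 ∧ ∑ a, z a * v a = 0 := by
  have hne : Nonempty α := Fintype.card_pos_iff.mp (by omega)
  by_cases hv : v = 0
  · refine ⟨Pi.single (Classical.arbitrary α) 1, ?_, by simp [hv]⟩
    intro h
    have := congrFun h (Classical.arbitrary α)
    simp at this
  · rcases Function.ne_iff.mp hv with ⟨a, ha⟩
    obtain ⟨b, hb⟩ := Fintype.exists_ne_of_one_lt_card hcard a
    refine ⟨fun t => (if t = b then v a else 0) + (if t = a then -v b else 0), ?_, ?_⟩
    · intro h
      have := congrFun h b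
      simp [hb] at this
      exact ha this
    · simp [add_mul, ite_mul, Finset.sum_add_distrib, Finset.sum_ite_eq', hb]
      ring

lemma Eset_bddBelow (hcard : 1 < Fintype.card α) (M : Matrix α α ℝ) :
    BddBelow (Eset M) := by
  refine ⟨-(∑ a, ∑ b, |M a b|), fun c hc => ?_⟩
  obtain ⟨v, hv, hb⟩ := hc
  obtain ⟨z, hz, hzv⟩ := exists_ne_zero_dot_eq_zero hcard v
  have h1 := hb z hzv
  have h2 : -((∑ a, ∑ b, |M a b|) * ∑ a, z a * z a) ≤ ∑ a, z a * M.mulVec z a :=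
    neg_le_of_abs_le (abs_quad_le M z)
  have h3 := sum_sq_pos' hz
  nlinarith

end aux

section spec
variable {α : Type*} [Fintype α] [DecidableEq α]

lemma dot_onb (b : OrthonormalBasis α ℝ (EuclideanSpace ℝ α)) (i j : α) :
    ∑ a, b i a * b j a = if i = j then (1:ℝ) else 0 := by
  have := orthonormal_iff_ite.mp b.orthonormal i j
  simpa [PiLp.inner_apply, RCLike.inner_apply, conj_trivial, mul_comm] using this

lemma parseval (b : OrthonormalBasis α ℝ (EuclideanSpace ℝ α)) (x y : α → ℝ) :
    ∑ a, x a * y a = ∑ i, (∑ a, x a * b i a) * (∑ a, b i a * y a) := by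
  have := b.sum_inner_mul_inner
    ((WithLp.equiv 2 (α → ℝ)).symm x) ((WithLp.equiv 2 (α → ℝ)).symm y)
  simpa [PiLp.inner_apply, RCLike.inner_apply, conj_trivial,
    WithLp.equiv_symm_apply, PiLp.toLp_apply, mul_comm] using this.symm
end spec

section spec2
variable {α : Type*} [Fintype α] [DecidableEq α]

lemma bilin_expand (M : Matrix α α ℝ) (u w : α → ℝ) :
    ∑ a, u a * M.mulVec w a = ∑ a, ∑ b, M a b * (u a * w b) := by
  refine Finset.sum_congr rfl fun a _ => ?_
  rw [Matrix.mulVec, dotProduct, Finset.mul_sum]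
  exact Finset.sum_congr rfl fun b _ => by ring

lemma dot_mulVec_symm {M : Matrix α α ℝ} (hM : M.IsHermitian) (u w : α → ℝ) :
    ∑ a, u a * M.mulVec w a = ∑ a, w a * M.mulVec u a := by
  rw [bilin_expand, bilin_expand, Finset.sum_comm]
  refine Finset.sum_congr rfl fun a _ => Finset.sum_congr rfl fun b _ => ?_
  have : M b a = M a b := by
    have := hM.apply b a
    simpa using this.symm
  rw [this]; ring

lemma quad_eig {M : Matrix α α ℝ} (hM : M.IsHermitian) (x : α → ℝ) :
    ∑ a, x a * M.mulVec x a
      = ∑ i, hM.eigenvalues i * (∑ a, x a * hM.eigenvectorBasis i a) ^ 2 := by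
  rw [parseval hM.eigenvectorBasis x (M.mulVec x)]
  refine Finset.sum_congr rfl fun i _ => ?_
  have h1 : ∑ a, hM.eigenvectorBasis i a * M.mulVec x a
      = ∑ a, x a * M.mulVec (hM.eigenvectorBasis i) a :=
    dot_mulVec_symm hM _ _
  have h2 : M.mulVec (hM.eigenvectorBasis i) = fun a => hM.eigenvalues i * hM.eigenvectorBasis i a := by
    have := hM.mulVec_eigenvectorBasis i
    funext a
    have := congrFun this a
    simpa using this
  rw [h1, h2]
  have : ∑ a, x a * (hM.eigenvalues i * hM.eigenvectorBasis i a)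
      = hM.eigenvalues i * ∑ a, x a * hM.eigenvectorBasis i a := by
    rw [Finset.mul_sum]; exact Finset.sum_congr rfl fun a _ => by ring
  rw [this]; ring

lemma norm_eig {M : Matrix α α ℝ} (hM : M.IsHermitian) (x : α → ℝ) :
    ∑ a, x a * x a = ∑ i, (∑ a, x a * hM.eigenvectorBasis i a) ^ 2 := by
  rw [parseval hM.eigenvectorBasis x x]
  exact Finset.sum_congr rfl fun i _ => by
    rw [pow_two]
    congr 1
    exact Finset.sum_congr rfl fun a _ => by ring

end spec2

section spec3
variable {α : Type*} [Fintype α] [DecidableEq α]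

lemma dot_star_eq (z y : α → ℝ) : dotProduct (star z) y = ∑ a, z a * y a := by
  simp [dotProduct]

lemma herm_aux {M : Matrix α α ℝ} (hM : M.IsHermitian) (c : ℝ) (w : α → ℝ) :
    (c • (1 : Matrix α α ℝ) + Matrix.vecMulVec w w - M).IsHermitian := by
  rw [Matrix.IsHermitian]
  ext i j
  have hm : M i j = M j i := by simpa using (hM.apply i j).symm
  simp [Matrix.conjTranspose_apply, Matrix.sub_apply, Matrix.add_apply, Matrix.smul_apply,
    Matrix.one_apply, Matrix.vecMulVec_apply, hm, eq_comm, mul_comm]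

lemma quad_shift (M : Matrix α α ℝ) (c : ℝ) (w z : α → ℝ) :
    ∑ a, z a * ((c • (1 : Matrix α α ℝ) + Matrix.vecMulVec w w - M) *ᵥ z) a
      = c * (∑ a, z a * z a) + (∑ a, z a * w a) ^ 2 - ∑ a, z a * M.mulVec z a := by
  rw [Matrix.sub_mulVec, Matrix.add_mulVec]
  simp only [Pi.sub_apply, Pi.add_apply, mul_sub, mul_add]
  rw [Finset.sum_sub_distrib, Finset.sum_add_distrib]
  congr 1
  congr 1
  · have h : (c • (1 : Matrix α α ℝ)) *ᵥ z = c • z := by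
      rw [Matrix.smul_mulVec, Matrix.one_mulVec]
    rw [h, Finset.mul_sum]
    exact Finset.sum_congr rfl fun a _ => by simp; ring
  · have h : ∀ a, z a * (Matrix.vecMulVec w w *ᵥ z) a
        = (z a * w a) * ∑ b, z b * w b := by
      intro a
      rw [Matrix.mulVec, dotProduct]
      simp only [Matrix.vecMulVec_apply]
      rw [Finset.mul_sum, Finset.mul_sum]
      exact Finset.sum_congr rfl fun b _ => by ring
    rw [Finset.sum_congr rfl fun a _ => h a, ← Finset.sum_mul, pow_two]

lemma psd_to_E [Nonempty α] {M : Matrix α α ℝ} {c : ℝ} {w : α → ℝ}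
    (h : (c • (1 : Matrix α α ℝ) + Matrix.vecMulVec w w - M).PosSemidef) : c ∈ Eset M := by
  by_cases hw : w = 0
  · refine ⟨fun _ => 1, fun hh => one_ne_zero (congrFun hh (Classical.arbitrary α)), fun z _ => ?_⟩
    have h2 := h.dotProduct_mulVec_nonneg z
    rw [dot_star_eq, quad_shift] at h2
    have : (∑ a, z a * w a) = 0 := by simp [hw]
    rw [this] at h2
    simp at h2
    linarith
  · refine ⟨w, hw, fun z hz => ?_⟩
    have h2 := h.dotProduct_mulVec_nonneg z
    rw [dot_star_eq, quad_shift, hz] at h2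
    simp at h2
    linarith

end spec3

section spec4
variable {α : Type*} [Fintype α] [DecidableEq α]

/-- coordinates of a combination of two basis vectors -/
lemma combo_dot (b : OrthonormalBasis α ℝ (EuclideanSpace ℝ α)) {i₀ i : α} (p q : ℝ) (j : α) :
    ∑ a, (p * b i₀ a + q * b i a) * b j a
      = p * (if i₀ = j then (1:ℝ) else 0) + q * (if i = j then (1:ℝ) else 0) := by
  simp only [add_mul]
  rw [Finset.sum_add_distrib, ← dot_onb b i₀ j, ← dot_onb b i j, Finset.mul_sum, Finset.mul_sum]
  congr 1 <;> exact Finset.sum_congr rfl fun a _ => by ring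

/-- At most one eigenvalue can exceed any element of `Eset`. -/
lemma one_big_eig {M : Matrix α α ℝ} (hM : M.IsHermitian) {c : ℝ} {v : α → ℝ} (hv : v ≠ 0)
    (hR : ∀ z : α → ℝ, (∑ a, z a * v a) = 0 →
      (∑ a, z a * M.mulVec z a) ≤ c * ∑ a, z a * z a)
    {i₀ i : α} (hne : i ≠ i₀) (h₀ : c < hM.eigenvalues i₀) : hM.eigenvalues i ≤ c := by
  by_contra hci
  push_neg at hci
  set B := hM.eigenvectorBasis with hB
  set lam := hM.eigenvalues with hlam
  set β := ∑ a, B i₀ a * v a with hβ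
  set γ := ∑ a, B i a * v a with hγ
  obtain ⟨p, q, hpq, horth⟩ : ∃ p q : ℝ, ¬(p = 0 ∧ q = 0) ∧ p * β + q * γ = 0 := by
    by_cases h : β = 0 ∧ γ = 0
    · exact ⟨1, 0, by simp, by simp [h.1, h.2]⟩
    · refine ⟨γ, -β, ?_, by ring⟩
      rintro ⟨h1, h2⟩
      exact h ⟨neg_eq_zero.mp h2, h1⟩
  set x : α → ℝ := fun a => p * B i₀ a + q * B i a with hx
  have horth' : ∑ a, x a * v a = 0 := by
    simp only [hx, add_mul]
    rw [Finset.sum_add_distrib]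
    have e1 : ∑ a, p * B i₀ a * v a = p * β := by
      rw [hβ, Finset.mul_sum]; exact Finset.sum_congr rfl fun a _ => by ring
    have e2 : ∑ a, q * B i a * v a = q * γ := by
      rw [hγ, Finset.mul_sum]; exact Finset.sum_congr rfl fun a _ => by ring
    rw [e1, e2, horth]
  have hco : ∀ j, ∑ a, x a * B j a
      = p * (if i₀ = j then (1:ℝ) else 0) + q * (if i = j then (1:ℝ) else 0) :=
    combo_dot B p q
  have hkey := hR x horth'
  rw [quad_eig hM, norm_eig hM] at hkey
  have hsum : ∀ S : α → ℝ, ∑ j, (c - lam j) * (∑ a, x a * B j a) ^ 2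
      = (c - lam i₀) * p ^ 2 + (c - lam i) * q ^ 2 := by
    intro S
    have hzero : ∀ j ∈ Finset.univ, j ∉ ({i₀, i} : Finset α) →
        (c - lam j) * (∑ a, x a * B j a) ^ 2 = 0 := by
      intro j _ hj
      simp only [Finset.mem_insert, Finset.mem_singleton] at hj
      push_neg at hj
      rw [hco j, if_neg (fun h => hj.1 h.symm), if_neg (fun h => hj.2 h.symm)]
      ring
    rw [← Finset.sum_subset (Finset.subset_univ ({i₀, i} : Finset α)) hzero,
      Finset.sum_pair (Ne.symm hne)]
    rw [hco i₀, hco i, if_pos rfl, if_pos rfl, if_neg (Ne.symm hne), if_neg hne]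
    ring
  have hkey2 : 0 ≤ (c - lam i₀) * p ^ 2 + (c - lam i) * q ^ 2 := by
    rw [← hsum (fun _ => 0)]
    have : ∑ j, (c - lam j) * (∑ a, x a * B j a) ^ 2
        = c * (∑ j, (∑ a, x a * B j a) ^ 2) - ∑ j, lam j * (∑ a, x a * B j a) ^ 2 := by
      rw [Finset.mul_sum, ← Finset.sum_sub_distrib]
      exact Finset.sum_congr rfl fun j _ => by ring
    rw [this]
    linarith
  rcases not_and_or.mp hpq with hp | hq
  · nlinarith [sq_nonneg p, sq_nonneg q, (pow_pos (abs_pos.mpr hp) 2), sq_abs p]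
  · nlinarith [sq_nonneg p, sq_nonneg q, (pow_pos (abs_pos.mpr hq) 2), sq_abs q]

lemma specA {M : Matrix α α ℝ} (hM : M.IsHermitian) {c : ℝ}
    (hcard : 1 < Fintype.card α) (hc : c ∈ Eset M) :
    ∃ w : α → ℝ, (c • (1 : Matrix α α ℝ) + Matrix.vecMulVec w w - M).PosSemidef := by
  have hne : Nonempty α := Fintype.card_pos_iff.mp (by omega)
  obtain ⟨v, hv, hR⟩ := hc
  set B := hM.eigenvectorBasis with hB
  set lam := hM.eigenvalues with hlam
  obtain ⟨i₀, -, hmax⟩ := Finset.exists_max_image Finset.univ lam Finset.univ_nonempty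
  have hone : ∀ i, i ≠ i₀ → lam i ≤ c := by
    intro i hi
    by_cases h₀ : c < lam i₀
    · exact one_big_eig hM hv hR hi h₀
    · push_neg at h₀
      exact (hmax i (Finset.mem_univ i)).trans h₀
  by_cases hle : lam i₀ ≤ c
  · refine ⟨0, .of_dotProduct_mulVec_nonneg (herm_aux hM c 0) fun z => ?_⟩
    rw [dot_star_eq, quad_shift, quad_eig hM, norm_eig hM]
    have : ∑ i, lam i * (∑ a, z a * B i a) ^ 2 ≤ c * ∑ i, (∑ a, z a * B i a) ^ 2 := by
      rw [Finset.mul_sum]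
      refine Finset.sum_le_sum fun i _ => ?_
      exact mul_le_mul_of_nonneg_right ((hmax i (Finset.mem_univ i)).trans hle) (sq_nonneg _)
    nlinarith [sq_nonneg (∑ a, z a * (0:α → ℝ) a)]
  · push_neg at hle
    refine ⟨Real.sqrt (lam i₀ - c) • (fun a => B i₀ a), .of_dotProduct_mulVec_nonneg (herm_aux hM c _) fun z => ?_⟩
    rw [dot_star_eq, quad_shift, quad_eig hM, norm_eig hM]
    have hw : (∑ a, z a * (Real.sqrt (lam i₀ - c) • (fun a => B i₀ a)) a) ^ 2
        = (lam i₀ - c) * (∑ a, z a * B i₀ a) ^ 2 := by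
      have : ∑ a, z a * (Real.sqrt (lam i₀ - c) • (fun a => B i₀ a)) a
          = Real.sqrt (lam i₀ - c) * ∑ a, z a * B i₀ a := by
        rw [Finset.mul_sum]
        exact Finset.sum_congr rfl fun a _ => by simp; ring
      rw [this, mul_pow, Real.sq_sqrt (by linarith)]
    rw [hw]
    have key : ∑ i, lam i * (∑ a, z a * B i a) ^ 2
        ≤ c * (∑ i, (∑ a, z a * B i a) ^ 2) + (lam i₀ - c) * (∑ a, z a * B i₀ a) ^ 2 := by
      have : ∀ i ∈ Finset.univ, lam i * (∑ a, z a * B i a) ^ 2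
          ≤ c * (∑ a, z a * B i a) ^ 2
            + (if i = i₀ then (lam i₀ - c) * (∑ a, z a * B i₀ a) ^ 2 else 0) := by
        intro i _
        by_cases h : i = i₀
        · subst h; simp; nlinarith [sq_nonneg (∑ a, z a * B i a)]
        · rw [if_neg h]
          nlinarith [sq_nonneg (∑ a, z a * B i a), hone i h]
      calc ∑ i, lam i * (∑ a, z a * B i a) ^ 2
          ≤ ∑ i, (c * (∑ a, z a * B i a) ^ 2
            + (if i = i₀ then (lam i₀ - c) * (∑ a, z a * B i₀ a) ^ 2 else 0)) :=
            Finset.sum_le_sum this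
        _ = c * (∑ i, (∑ a, z a * B i a) ^ 2) + (lam i₀ - c) * (∑ a, z a * B i₀ a) ^ 2 := by
            rw [Finset.sum_add_distrib, Finset.sum_ite_eq' Finset.univ i₀, Finset.mul_sum]
            simp
    linarith

lemma specB {M : Matrix α α ℝ} (hM : M.IsHermitian) (hcard : 1 < Fintype.card α) :
    sInf (Eset M) ∈ Eset M := by
  have hne : Nonempty α := Fintype.card_pos_iff.mp (by omega)
  set B := hM.eigenvectorBasis with hB
  set lam := hM.eigenvalues with hlam
  obtain ⟨i₀, -, hmax⟩ := Finset.exists_max_image Finset.univ lam Finset.univ_nonempty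
  have herase : (Finset.univ.erase i₀).Nonempty := by
    rw [← Finset.card_pos, Finset.card_erase_of_mem (Finset.mem_univ i₀), Finset.card_univ]
    omega
  obtain ⟨i₁, hi₁mem, hmax₁⟩ := Finset.exists_max_image (Finset.univ.erase i₀) lam herase
  have hi₁ : i₁ ≠ i₀ := Finset.ne_of_mem_erase hi₁mem
  have hBne : (fun a => B i₀ a) ≠ (0 : α → ℝ) := by
    intro h
    have h1 := dot_onb B i₀ i₀
    rw [if_pos rfl] at h1
    have : ∑ a, B i₀ a * B i₀ a = 0 := by
      refine Finset.sum_eq_zero fun a _ => ?_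
      have h2 := congrFun h a
      simp only [Pi.zero_apply] at h2
      rw [h2]; ring
    rw [this] at h1
    exact one_ne_zero h1.symm
  have hmem : lam i₁ ∈ Eset M := by
    refine ⟨fun a => B i₀ a, hBne, fun z hz => ?_⟩
    rw [quad_eig hM, norm_eig hM]
    have hz0 : ∑ a, z a * B i₀ a = 0 := hz
    rw [Finset.mul_sum]
    refine Finset.sum_le_sum fun i _ => ?_
    by_cases h : i = i₀
    · subst h; rw [hz0]; simp
    · exact mul_le_mul_of_nonneg_right
        (hmax₁ i (Finset.mem_erase.mpr ⟨h, Finset.mem_univ i⟩)) (sq_nonneg _)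
  have hlb : ∀ c ∈ Eset M, lam i₁ ≤ c := by
    rintro c ⟨v, hv, hR⟩
    by_contra hlt
    push_neg at hlt
    have h₀ : c < lam i₀ := hlt.trans_le (hmax i₁ (Finset.mem_univ i₁))
    exact absurd (one_big_eig hM hv hR hi₁ h₀) (not_le.mpr hlt)
  have : sInf (Eset M) = lam i₁ :=
    le_antisymm (csInf_le (Eset_bddBelow hcard M) hmem) (le_csInf ⟨lam i₁, hmem⟩ hlb)
  rw [this]
  exact hmem

end spec4

section transfer
variable {α : Type*} [Fintype α] [DecidableEq α]

lemma set_transfer (sq μ : α → ℝ) (hsq : ∀ a, sq a ≠ 0) (hμ : ∀ a, μ a = sq a * sq a)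
    (M M' : Matrix α α ℝ) (hMM' : ∀ a b, μ a * M a b = sq a * M' a b * sq b) :
    {c : ℝ | ∃ v : α → ℝ, v ≠ 0 ∧ ∀ x : α → ℝ,
      (∑ a, μ a * x a * v a) = 0 →
        (∑ a, μ a * x a * M.mulVec x a) ≤ c * ∑ a, μ a * x a * x a} = Eset M' := by
  have hq : ∀ x : α → ℝ, ∑ a, μ a * x a * M.mulVec x a
      = ∑ a, (sq a * x a) * M'.mulVec (fun b => sq b * x b) a := by
    intro x
    refine Finset.sum_congr rfl fun a _ => ?_
    rw [Matrix.mulVec, Matrix.mulVec, dotProduct, dotProduct, Finset.mul_sum, Finset.mul_sum]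
    refine Finset.sum_congr rfl fun b _ => ?_
    linear_combination (x a * x b) * hMM' a b
  have hn : ∀ x : α → ℝ, ∑ a, μ a * x a * x a = ∑ a, (sq a * x a) * (sq a * x a) := by
    intro x
    exact Finset.sum_congr rfl fun a _ => by rw [hμ a]; ring
  ext c
  constructor
  · rintro ⟨v, hv, h⟩
    obtain ⟨a₀, ha₀⟩ := Function.ne_iff.mp hv
    refine ⟨fun a => sq a * v a, ?_, fun z hz => ?_⟩
    · intro hh
      exact mul_ne_zero (hsq a₀) ha₀ (congrFun hh a₀)
    · set x : α → ℝ := fun a => z a / sq a with hxdef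
      have hzx : ∀ a, sq a * x a = z a := by
        intro a
        simp only [hxdef]
        rw [mul_comm]
        exact div_mul_cancel₀ (z a) (hsq a)
      have horth : ∑ a, μ a * x a * v a = 0 := by
        have e : ∀ a, μ a * x a * v a = z a * (sq a * v a) := by
          intro a
          rw [hμ a]
          linear_combination (sq a * v a) * hzx a
        rw [Finset.sum_congr rfl fun a _ => e a]
        exact hz
      have := h x horth
      rw [hq, hn] at this
      simp only [hzx] at this
      exact this
  · rintro ⟨v', hv', h⟩
    obtain ⟨a₀, ha₀⟩ := Function.ne_iff.mp hv'
    refine ⟨fun a => v' a / sq a, ?_, fun x hx => ?_⟩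
    · intro hh
      exact div_ne_zero ha₀ (hsq a₀) (congrFun hh a₀)
    · have horth : ∑ a, (sq a * x a) * v' a = 0 := by
        have e : ∀ a, (sq a * x a) * v' a = μ a * x a * (v' a / sq a) := by
          intro a
          have h2 : μ a * x a * (v' a / sq a) = (sq a * x a) * v' a * (sq a / sq a) := by
            rw [hμ a]; ring
          rw [h2, div_self (hsq a), mul_one]
        rw [Finset.sum_congr rfl fun a _ => e a]
        exact hx
      have := h (fun a => sq a * x a) horth
      rw [hq, hn]
      exact this

end transfer

section bridge
variable {α : Type*} [Fintype α] [DecidableEq α]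

lemma scale_quad {N : Matrix α α ℝ} {part : α → Bool}
    (hNb : ∀ a b, part a = part b → N a b = 0) (r : ℝ) (x : α → ℝ) :
    ∑ a, (if part a then x a else r * x a) *
      N.mulVec (fun a => if part a then x a else r * x a) a
      = r * ∑ a, x a * N.mulVec x a := by
  rw [show (∑ a, (if part a then x a else r * x a) *
      N.mulVec (fun a => if part a then x a else r * x a) a)
      = ∑ a, (fun a => if part a then x a else r * x a) a *
        N.mulVec (fun a => if part a then x a else r * x a) a from rfl,
    bilin_expand, bilin_expand, Finset.mul_sum]
  refine Finset.sum_congr rfl fun a _ => ?_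
  rw [Finset.mul_sum]
  refine Finset.sum_congr rfl fun b _ => ?_
  by_cases hab : part a = part b
  · rw [hNb a b hab]; ring
  · cases hpa : part a <;> cases hpb : part b <;> rw [hpa, hpb] at hab <;>
      simp only [hpa, hpb, if_true, if_false, Bool.false_eq_true] <;>
      first | (exact absurd rfl hab) | ring

lemma scale_norm {part : α → Bool} (r : ℝ) (x : α → ℝ) :
    ∑ a, (if part a then x a else r * x a) * (if part a then x a else r * x a)
      = ∑ a, (if part a then 1 else r ^ 2) * (x a * x a) := by
  refine Finset.sum_congr rfl fun a _ => ?_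
  by_cases hpa : part a <;> simp [hpa] <;> ring

lemma scale_ne_zero {v : α → ℝ} (hv : v ≠ 0) {part : α → Bool} {r : ℝ} (hr : r ≠ 0) :
    (fun a => if part a then v a else r * v a) ≠ 0 := by
  obtain ⟨a₀, ha₀⟩ := Function.ne_iff.mp hv
  intro hh
  have h2 := congrFun hh a₀
  simp only [Pi.zero_apply] at h2
  apply ha₀
  by_cases hpa : part a₀
  · rw [if_pos hpa] at h2; exact h2
  · rw [if_neg hpa] at h2; exact (mul_eq_zero.mp h2).resolve_left hr

lemma diag_quad (N : Matrix α α ℝ) (s : α → ℝ) (x : α → ℝ) :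
    ∑ a, x a * ((N - Matrix.diagonal s) *ᵥ x) a
      = ∑ a, x a * N.mulVec x a - ∑ a, s a * (x a * x a) := by
  rw [Matrix.sub_mulVec, ← Finset.sum_sub_distrib]
  refine Finset.sum_congr rfl fun a _ => ?_
  simp only [Pi.sub_apply, mul_sub]
  rw [Matrix.mulVec_diagonal]
  ring

lemma scale_orth {part : α → Bool} (r : ℝ) (x v : α → ℝ)
    (hx : ∑ a, x a * (if part a then v a else r * v a) = 0) :
    ∑ a, (if part a then x a else r * x a) * v a = 0 := by
  rw [← hx]
  refine Finset.sum_congr rfl fun a _ => ?_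
  by_cases hpa : part a <;> simp [hpa] <;> ring

lemma bridge_fwd {N : Matrix α α ℝ} {part : α → Bool}
    (hNb : ∀ a b, part a = part b → N a b = 0)
    (hcard : 1 < Fintype.card α) {sX sY : ℝ} (hsX : 0 ≤ sX) (hsY : 0 ≤ sY)
    (h : sInf (Eset N) ≤ Real.sqrt (sX * sY)) :
    sInf (Eset (N - Matrix.diagonal (fun a => if part a then sX else sY))) ≤ 0 := by
  have hne : Nonempty α := Fintype.card_pos_iff.mp (by omega)
  set c := Real.sqrt (sX * sY) with hcdef
  have hc0 : 0 ≤ c := Real.sqrt_nonneg _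
  have hc2 : c ^ 2 = sX * sY := Real.sq_sqrt (mul_nonneg hsX hsY)
  have hAM : 2 * c ≤ sX + sY := by
    have e : c = Real.sqrt sX * Real.sqrt sY := by rw [hcdef, Real.sqrt_mul hsX]
    nlinarith [sq_nonneg (Real.sqrt sX - Real.sqrt sY), Real.sq_sqrt hsX, Real.sq_sqrt hsY]
  have key : ∀ ε : ℝ, 0 < ε →
      sInf (Eset (N - Matrix.diagonal (fun a => if part a then sX else sY))) ≤ ε := by
    intro ε hε
    obtain ⟨e, heE, he⟩ := exists_lt_of_csInf_lt (Eset_nonempty N)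
      (show sInf (Eset N) < c + ε by linarith)
    obtain ⟨v, hv, hR⟩ : c + ε ∈ Eset N := Eset_upward heE (le_of_lt he)
    set r := (c + ε) / (sX + ε) with hrdef
    have hr : 0 < r := div_pos (by linarith) (by linarith)
    refine csInf_le (Eset_bddBelow hcard _)
      ⟨fun a => if part a then v a else r * v a, scale_ne_zero hv hr.ne', fun x hx => ?_⟩
    have hgv : ∑ a, (if part a then x a else r * x a) * v a = 0 := scale_orth r x v hx
    have h1 := hR (fun a => if part a then x a else r * x a) hgv
    rw [scale_quad hNb r x, scale_norm r x] at h1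
    rw [diag_quad]
    set Q := ∑ a, x a * N.mulVec x a with hQdef
    set T := ∑ a, (if part a then (1:ℝ) else r ^ 2) * (x a * x a) with hTdef
    have hQ : Q ≤ ((c + ε) * T) / r := by
      rw [le_div_iff₀ hr]
      linarith [h1]
    have hstep : ((c + ε) * T) / r - (∑ a, (if part a then sX else sY) * (x a * x a))
        ≤ ε * ∑ a, x a * x a := by
      have hcne : c + ε ≠ 0 := by linarith
      have hXc : (c + ε) / r = sX + ε := by
        rw [hrdef, div_div_eq_mul_div, mul_comm, mul_div_assoc, div_self hcne, mul_one]
      have hYc : (c + ε) / r * r ^ 2 ≤ sY + ε := by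
        have hr2 : (c + ε) / r * r ^ 2 = (c + ε) * r := by
          field_simp
        have hsXε : (0:ℝ) < sX + ε := by linarith
        rw [hr2, hrdef, ← mul_div_assoc, div_le_iff₀ hsXε]
        nlinarith [hc2, hAM, hε]
      have hmain : ∑ a, ((c + ε) / r * ((if part a then (1:ℝ) else r ^ 2) * (x a * x a))
            - (if part a then sX else sY) * (x a * x a) - ε * (x a * x a)) ≤ 0 := by
        refine Finset.sum_nonpos fun a _ => ?_
        by_cases hpa : part a
        · simp only [if_pos hpa]
          have e : (c + ε) / r * (1 * (x a * x a)) - sX * (x a * x a) - ε * (x a * x a)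
              = 0 := by rw [hXc]; ring
          exact le_of_eq e
        · simp only [if_neg hpa]
          have e : (c + ε) / r * (r ^ 2 * (x a * x a)) - sY * (x a * x a) - ε * (x a * x a)
              = ((c + ε) / r * r ^ 2 - sY - ε) * (x a * x a) := by ring
          rw [e]
          exact mul_nonpos_iff.mpr (Or.inr ⟨by linarith [hYc], mul_self_nonneg (x a)⟩)
      rw [Finset.sum_sub_distrib, Finset.sum_sub_distrib] at hmain
      have hsplit : ∑ a, ((c + ε) / r * ((if part a then (1:ℝ) else r ^ 2) * (x a * x a)))
          = (c + ε) * T / r := by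
        rw [← Finset.mul_sum, hTdef]
        ring
      have hsplit2 : ∑ a, ε * (x a * x a) = ε * ∑ a, x a * x a := by
        rw [Finset.mul_sum]
      rw [hsplit, hsplit2] at hmain
      linarith
    linarith
  by_contra hcon
  push_neg at hcon
  have := key (sInf (Eset (N - Matrix.diagonal (fun a => if part a then sX else sY))) / 2)
    (by linarith)
  linarith

end bridge

section bridge2
variable {α : Type*} [Fintype α] [DecidableEq α]

lemma bridge_bwd {N : Matrix α α ℝ} {part : α → Bool}
    (hNb : ∀ a b, part a = part b → N a b = 0)
    (hcard : 1 < Fintype.card α) {sX sY : ℝ} (hsX : 0 ≤ sX) (hsY : 0 ≤ sY)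
    (h : sInf (Eset (N - Matrix.diagonal (fun a => if part a then sX else sY))) ≤ 0) :
    sInf (Eset N) ≤ Real.sqrt (sX * sY) := by
  have hne : Nonempty α := Fintype.card_pos_iff.mp (by omega)
  set c := Real.sqrt (sX * sY) with hcdef
  have hc0 : 0 ≤ c := Real.sqrt_nonneg _
  have hc2 : c ^ 2 = sX * sY := Real.sq_sqrt (mul_nonneg hsX hsY)
  have key : ∀ δ : ℝ, 0 < δ → sInf (Eset N) ≤ Real.sqrt ((sX + δ) * (sY + δ)) := by
    intro δ hδ
    obtain ⟨e, heE, he⟩ := exists_lt_of_csInf_lt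
      (Eset_nonempty (N - Matrix.diagonal (fun a => if part a then sX else sY)))
      (show sInf (Eset (N - Matrix.diagonal (fun a => if part a then sX else sY))) < δ by
        linarith)
    obtain ⟨u, hu, hR⟩ :
        δ ∈ Eset (N - Matrix.diagonal (fun a => if part a then sX else sY)) :=
      Eset_upward heE (le_of_lt he)
    have hsXδ : (0:ℝ) < sX + δ := by linarith
    have hsYδ : (0:ℝ) < sY + δ := by linarith
    set r := Real.sqrt ((sX + δ) / (sY + δ)) with hrdef
    have hr : 0 < r := Real.sqrt_pos.mpr (div_pos hsXδ hsYδ)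
    set cδ := Real.sqrt ((sX + δ) * (sY + δ)) with hcδdef
    have hcδ0 : 0 ≤ cδ := Real.sqrt_nonneg _
    have hrr : r * r = (sX + δ) / (sY + δ) := Real.mul_self_sqrt (le_of_lt (div_pos hsXδ hsYδ))
    have h1 : (sY + δ) * r = cδ := by
      have hsq : ((sY + δ) * r) ^ 2 = (sX + δ) * (sY + δ) := by
        have : ((sY + δ) * r) ^ 2 = (sY + δ) ^ 2 * (r * r) := by ring
        rw [this, hrr]
        field_simp
      calc (sY + δ) * r = Real.sqrt (((sY + δ) * r) ^ 2) :=
            (Real.sqrt_sq (by positivity)).symm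
        _ = cδ := by rw [hsq]
    have h2 : sX + δ = cδ * r := by
      have hsq : (cδ * r) ^ 2 = (sX + δ) ^ 2 := by
        have e1 : (cδ * r) ^ 2 = cδ ^ 2 * (r * r) := by ring
        rw [e1, hrr, hcδdef, Real.sq_sqrt (by positivity)]
        field_simp
      have h5 : Real.sqrt ((cδ * r) ^ 2) = Real.sqrt ((sX + δ) ^ 2) := by rw [hsq]
      rw [Real.sqrt_sq (by positivity), Real.sqrt_sq (le_of_lt hsXδ)] at h5
      exact h5.symm
    refine csInf_le (Eset_bddBelow hcard _)
      ⟨fun a => if part a then u a else r * u a, scale_ne_zero hu hr.ne', fun x hx => ?_⟩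
    have hgu : ∑ a, (if part a then x a else r * x a) * u a = 0 := scale_orth r x u hx
    have h3 := hR (fun a => if part a then x a else r * x a) hgu
    rw [show ((fun a => if part a then x a else r * x a) : α → ℝ) =
      (fun a => if part a then x a else r * x a) from rfl] at h3
    rw [diag_quad] at h3
    rw [scale_quad hNb r x, scale_norm r x] at h3
    have hsw : ∑ a, (if part a then sX else sY) *
          ((if part a then x a else r * x a) * (if part a then x a else r * x a))
        = ∑ a, (if part a then sX else sY * r ^ 2) * (x a * x a) := by
      refine Finset.sum_congr rfl fun a _ => ?_
      by_cases hpa : part a <;> simp [hpa] <;> ring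
    rw [hsw] at h3
    set Q := ∑ a, x a * N.mulVec x a with hQdef
    have hsum : ∑ a, (δ * ((if part a then (1:ℝ) else r ^ 2) * (x a * x a))
          + (if part a then sX else sY * r ^ 2) * (x a * x a))
        = (cδ * r) * ∑ a, x a * x a := by
      rw [Finset.mul_sum]
      refine Finset.sum_congr rfl fun a _ => ?_
      by_cases hpa : part a
      · simp only [if_pos hpa]
        linear_combination (x a * x a) * h2
      · simp only [if_neg hpa]
        linear_combination (x a * x a) * r * h1
    rw [Finset.sum_add_distrib, ← Finset.mul_sum] at hsum
    have h4 : r * Q ≤ r * (cδ * ∑ a, x a * x a) := by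
      nlinarith [h3, hsum]
    exact le_of_mul_le_mul_left h4 hr
  have final : ∀ ε : ℝ, 0 < ε → sInf (Eset N) ≤ c + ε := by
    intro ε hε
    set δ := min 1 (ε ^ 2 / (sX + sY + 2)) with hδdef
    have hδpos : 0 < δ := lt_min one_pos (by positivity)
    have hδ1 : δ ≤ 1 := min_le_left _ _
    have hδ2 : δ * (sX + sY + 2) ≤ ε ^ 2 := by
      have := min_le_right 1 (ε ^ 2 / (sX + sY + 2))
      rw [hδdef]
      calc min 1 (ε ^ 2 / (sX + sY + 2)) * (sX + sY + 2)
          ≤ (ε ^ 2 / (sX + sY + 2)) * (sX + sY + 2) :=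
            mul_le_mul_of_nonneg_right this (by linarith)
        _ = ε ^ 2 := by field_simp
    have hsq : (sX + δ) * (sY + δ) ≤ (c + ε) ^ 2 := by
      nlinarith [hδpos, hδ1, hδ2, hc2, hc0, hε, hsX, hsY]
    calc sInf (Eset N) ≤ Real.sqrt ((sX + δ) * (sY + δ)) := key δ hδpos
      _ ≤ Real.sqrt ((c + ε) ^ 2) := Real.sqrt_le_sqrt hsq
      _ = c + ε := Real.sqrt_sq (by linarith)
  by_contra hcon
  push_neg at hcon
  have := final ((sInf (Eset N) - c) / 2) (by linarith)
  linarith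

end bridge2



/-- The second-largest eigenvalue of a matrix `M` that is self-adjoint with respect
to the inner product `⟨f,g⟩_μ = Σ_a μ(a) f(a) g(a)`, via the Courant–Fischer
variational characterization: the least `c` such that for some nonzero `v`, the
Rayleigh quotient of `M` is at most `c` on the `μ`-orthogonal complement of `v`. -/
noncomputable def lambda2 {α : Type*} [Fintype α] (M : Matrix α α ℝ) (μ : α → ℝ) : ℝ :=
  sInf {c : ℝ | ∃ v : α → ℝ, v ≠ 0 ∧ ∀ x : α → ℝ,
    (∑ a, μ a * x a * v a) = 0 →
      (∑ a, μ a * x a * M.mulVec x a) ≤ c * ∑ a, μ a * x a * x a}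

/-- Equivalent eigenvalue bounds for the random walk on a connected weighted
bipartite graph with parts `X = {part = true}` and `Y = {part = false}`,
adjacency matrix `A`, degrees `deg`, walk matrix `P = D⁻¹A`, normalized adjacency
`N = D^{-1/2} A D^{-1/2}`, and diagonal matrix `S` equal to `sX` on `X` and `sY`
on `Y`. -/
theorem stmt16 {α : Type*} [Fintype α] [DecidableEq α]
    (A : Matrix α α ℝ) (part : α → Bool)
    (hsymm : ∀ x y, A x y = A y x) (hnn : ∀ x y, 0 ≤ A x y)
    (hbip : ∀ x y, A x y ≠ 0 → part x ≠ part y)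
    (hX : ∃ x, part x = true) (hY : ∃ y, part y = false)
    (hdegpos : ∀ x, 0 < ∑ y, A x y)
    (hconn : ∀ x y : α, ∃ (k : ℕ) (q : Fin (k + 1) → α), q 0 = x ∧ q (Fin.last k) = y ∧
      ∀ i : Fin k, 0 < A (q i.castSucc) (q i.succ))
    (sX sY : ℝ) (hsX : 0 ≤ sX) (hsY : 0 ≤ sY) :
    List.TFAE [
      (∃ v : α → ℝ,
        ((Matrix.diagonal fun x => if part x then sX else sY) + Matrix.vecMulVec v v -
          Matrix.of fun x y => A x y / (Real.sqrt (∑ z, A x z) * Real.sqrt (∑ z, A y z))).PosSemidef),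
      (∃ w : α → ℝ,
        (Real.sqrt (sX * sY) • (1 : Matrix α α ℝ) + Matrix.vecMulVec w w -
          Matrix.of fun x y => A x y / (Real.sqrt (∑ z, A x z) * Real.sqrt (∑ z, A y z))).PosSemidef),
      lambda2 (Matrix.of fun x y => A x y / (∑ z, A x z)) (fun x => ∑ z, A x z) ≤
        Real.sqrt (sX * sY),
      lambda2 ((Matrix.of fun x y => A x y / (∑ z, A x z)) -
          (Matrix.diagonal fun x => if part x then sX else sY)) (fun x => ∑ z, A x z) ≤ 0] := by
  classical
  set N : Matrix α α ℝ :=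
    Matrix.of fun x y => A x y / (Real.sqrt (∑ z, A x z) * Real.sqrt (∑ z, A y z)) with hNdef
  set P : Matrix α α ℝ := Matrix.of fun x y => A x y / (∑ z, A x z) with hPdef
  set S : Matrix α α ℝ := Matrix.diagonal fun x => if part x then sX else sY with hSdef
  set μ : α → ℝ := fun x => ∑ z, A x z with hμdef
  have hdpos : ∀ a, 0 < μ a := hdegpos
  have hdne : ∀ a, μ a ≠ 0 := fun a => (hdpos a).ne'
  set sq : α → ℝ := fun a => Real.sqrt (∑ z, A a z) with hsqdef
  have hsqpos : ∀ a, 0 < sq a := fun a => Real.sqrt_pos.mpr (hdegpos a)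
  have hsqne : ∀ a, sq a ≠ 0 := fun a => (hsqpos a).ne'
  have hμsq : ∀ a, μ a = sq a * sq a := fun a =>
    (Real.mul_self_sqrt (le_of_lt (hdegpos a))).symm
  have hcard : 1 < Fintype.card α := by
    obtain ⟨x, hx⟩ := hX
    obtain ⟨y, hy⟩ := hY
    refine Fintype.one_lt_card_iff.mpr ⟨x, y, fun hxy => ?_⟩
    rw [hxy, hy] at hx
    exact Bool.noConfusion hx
  have hne : Nonempty α := Fintype.card_pos_iff.mp (by omega)
  have hNherm : N.IsHermitian := by
    rw [Matrix.IsHermitian]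
    ext a b
    rw [Matrix.conjTranspose_apply, hNdef]
    simp only [Matrix.of_apply, star_trivial]
    rw [hsymm b a, mul_comm]
  have hSherm : S.IsHermitian := by
    rw [hSdef]
    exact Matrix.isHermitian_diagonal _
  have hNSherm : (N - S).IsHermitian := hNherm.sub hSherm
  have hNb : ∀ a b, part a = part b → N a b = 0 := by
    intro a b hab
    have hA : A a b = 0 := by
      by_contra h'
      exact (hbip a b h') hab
    rw [hNdef]
    simp [hA]
  have hMM' : ∀ a b, μ a * P a b = sq a * N a b * sq b := by
    intro a b
    rw [hPdef, hNdef]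
    simp only [Matrix.of_apply]
    have e1 : μ a * (A a b / (∑ z, A a z)) = A a b := by
      rw [hμdef]
      rw [mul_comm]
      exact div_mul_cancel₀ (A a b) (hdne a)
    rw [e1, hsqdef]
    have e2 : Real.sqrt (∑ z, A a z) * (A a b / (Real.sqrt (∑ z, A a z) * Real.sqrt (∑ z, A b z)))
          * Real.sqrt (∑ z, A b z)
        = A a b * ((Real.sqrt (∑ z, A a z) * Real.sqrt (∑ z, A b z))
          / (Real.sqrt (∑ z, A a z) * Real.sqrt (∑ z, A b z))) := by
      ring
    rw [e2, div_self (mul_ne_zero (Real.sqrt_ne_zero'.mpr (hdegpos a))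
      (Real.sqrt_ne_zero'.mpr (hdegpos b))), mul_one]
  have hMM2 : ∀ a b, μ a * (P - S) a b = sq a * (N - S) a b * sq b := by
    intro a b
    simp only [Matrix.sub_apply]
    by_cases hab : a = b
    · subst hab
      linear_combination hMM' a a - S a a * hμsq a
    · have hS0 : S a b = 0 := by rw [hSdef]; exact Matrix.diagonal_apply_ne _ hab
      rw [hS0]
      linear_combination hMM' a b
  have hT1 : lambda2 P μ = sInf (Eset N) := by
    unfold lambda2
    congr 1
    exact set_transfer sq μ hsqne hμsq P N hMM'
  have hT2 : lambda2 (P - S) μ = sInf (Eset (N - S)) := by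
    unfold lambda2
    congr 1
    exact set_transfer sq μ hsqne hμsq (P - S) (N - S) hMM2
  have hmat : ∀ v : α → ℝ,
      (0:ℝ) • (1 : Matrix α α ℝ) + Matrix.vecMulVec v v - (N - S)
        = S + Matrix.vecMulVec v v - N := by
    intro v
    rw [zero_smul]
    abel
  tfae_have 1 → 4 := by
    rintro ⟨v, hpsd⟩
    rw [hT2]
    refine csInf_le (Eset_bddBelow hcard _) ?_
    have := psd_to_E (M := N - S) (c := 0) (w := v) (by rw [hmat v]; exact hpsd)
    exact this
  tfae_have 4 → 1 := by
    intro h4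
    rw [hT2] at h4
    have h0 : (0:ℝ) ∈ Eset (N - S) := Eset_upward (specB hNSherm hcard) h4
    obtain ⟨w, hw⟩ := specA hNSherm hcard h0
    rw [hmat w] at hw
    exact ⟨w, hw⟩
  tfae_have 2 → 3 := by
    rintro ⟨w, hpsd⟩
    rw [hT1]
    exact csInf_le (Eset_bddBelow hcard _) (psd_to_E hpsd)
  tfae_have 3 → 2 := by
    intro h3
    rw [hT1] at h3
    have hm : Real.sqrt (sX * sY) ∈ Eset N := Eset_upward (specB hNherm hcard) h3
    exact specA hNherm hcard hm
  tfae_have 3 → 4 := by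
    intro h3
    rw [hT1] at h3
    rw [hT2, hSdef]
    exact bridge_fwd hNb hcard hsX hsY h3
  tfae_have 4 → 3 := by
    intro h4
    rw [hT2, hSdef] at h4
    rw [hT1]
    exact bridge_bwd hNb hcard hsX hsY h4
  tfae_finish
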